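/- arXiv:1905.10428 — 6 statements merged into one kernel-verified Lean document; each statement's English description precedes it below -/
import Mathlib

section
/- Assume λ1 > 0, λ2 ≥ 0 with λ1 + λ2 ≥ 1, and assume π_i > 0 for every class i. Then for all conditional probabilities P_R^i, P_L^i ∈ [0,1] (i = 1,…,K) satisfying P_R^i + P_L^i ≥ 1 for every i, the binary objective J satisfies −λ1 ≤ J ≤ λ2. Moreover, J = −λ1 if and only if the split is perfectly balanced and perfectly pure. -/
/-- Bounds and minimizer characterization for the binary LdSM
node objective.  Assume `λ1 > 0`, `λ2 ≥ 0` with `λ1 + λ2 ≥ 1`, and `π i > 0`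
for every class `i` (with weights in `[0,1]` summing to `1`).  Then for all
conditional probabilities `P_R^i, P_L^i ∈ [0,1]` satisfying
`P_R^i + P_L^i ≥ 1`, the binary objective `J` satisfies `−λ1 ≤ J ≤ λ2`, and
`J = −λ1` if and only if the split is perfectly balanced (`P_R = P_L`) and
perfectly pure (for every class exactly one of `P_R^i, P_L^i` is `1` and the
other is `0`). -/
theorem ldsm_binary_objective_bounds_and_min
    (K : ℕ) (hK : 1 ≤ K)
    (lam1 lam2 : ℝ) (hlam1 : 0 < lam1) (hlam2 : 0 ≤ lam2) (hlam : 1 ≤ lam1 + lam2)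
    (π PR PL : Fin K → ℝ)
    (hπpos : ∀ i, 0 < π i) (hπle : ∀ i, π i ≤ 1) (hπsum : ∑ i, π i = 1)
    (hPR : ∀ i, PR i ∈ Set.Icc (0 : ℝ) 1)
    (hPL : ∀ i, PL i ∈ Set.Icc (0 : ℝ) 1)
    (hRL : ∀ i, 1 ≤ PR i + PL i) :
    let PRbar : ℝ := ∑ i, π i * PR i
    let PLbar : ℝ := ∑ i, π i * PL i
    let J : ℝ := |PRbar - PLbar| - lam1 * (∑ i, π i * |PR i - PL i|)
      + lam2 * |PRbar + PLbar - 1|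
    (-lam1 ≤ J ∧ J ≤ lam2) ∧
      (J = -lam1 ↔
        (PRbar = PLbar ∧
          ∀ i, (PR i = 1 ∧ PL i = 0) ∨ (PR i = 0 ∧ PL i = 1))) := by
  intro PRbar PLbar J
  have hπ0 : ∀ i, 0 ≤ π i := fun i => (hπpos i).le
  set A : ℝ := ∑ i, π i * |PR i - PL i| with hAdef
  -- per-class bounds
  have habs1 : ∀ i, |PR i - PL i| ≤ 1 := by
    intro i
    rw [abs_le]
    constructor
    · linarith [(hPR i).1, (hPL i).2]
    · linarith [(hPR i).2, (hPL i).1]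
  have hA1 : A ≤ 1 := by
    rw [hAdef, ← hπsum]
    apply Finset.sum_le_sum
    intro i _
    nlinarith [habs1 i, hπpos i, abs_nonneg (PR i - PL i)]
  have hA0 : 0 ≤ A :=
    Finset.sum_nonneg fun i _ => mul_nonneg (hπ0 i) (abs_nonneg _)
  have hDsum : PRbar - PLbar = ∑ i, π i * (PR i - PL i) := by
    simp only [PRbar, PLbar, ← Finset.sum_sub_distrib, mul_sub]
  have hDbar : |PRbar - PLbar| ≤ A := by
    rw [hDsum]
    calc |∑ i, π i * (PR i - PL i)| ≤ ∑ i, |π i * (PR i - PL i)| :=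
          Finset.abs_sum_le_sum_abs _ _
      _ = A := by
          apply Finset.sum_congr rfl
          intro i _
          rw [abs_mul, abs_of_nonneg (hπ0 i)]
  have hSsum : PRbar + PLbar = ∑ i, π i * (PR i + PL i) := by
    simp only [PRbar, PLbar, ← Finset.sum_add_distrib, mul_add]
  have hS1 : 1 ≤ PRbar + PLbar := by
    rw [hSsum, ← hπsum]
    apply Finset.sum_le_sum
    intro i _
    nlinarith [hRL i, hπpos i]
  have hSabs : |PRbar + PLbar - 1| = PRbar + PLbar - 1 := abs_of_nonneg (by linarith)
  -- key: A + (PRbar + PLbar) ≤ 2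
  have hAS : A + (PRbar + PLbar) ≤ 2 := by
    have : A + (PRbar + PLbar) = ∑ i, π i * (|PR i - PL i| + (PR i + PL i)) := by
      rw [hAdef, hSsum, ← Finset.sum_add_distrib]
      exact Finset.sum_congr rfl fun i _ => by ring
    rw [this]
    have h2 : (2 : ℝ) = ∑ i, π i * 2 := by
      rw [← Finset.sum_mul, hπsum, one_mul]
    rw [h2]
    apply Finset.sum_le_sum
    intro i _
    have hd : |PR i - PL i| + (PR i + PL i) ≤ 2 := by
      rcases abs_cases (PR i - PL i) with ⟨h, _⟩ | ⟨h, _⟩ <;>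
        [linarith [(hPL i).1, (hPR i).2]; linarith [(hPR i).1, (hPL i).2]]
    nlinarith [hπpos i]
  have hJdef : J = |PRbar - PLbar| - lam1 * A + lam2 * |PRbar + PLbar - 1| := rfl
  constructor
  · constructor
    · rw [hJdef]
      have := abs_nonneg (PRbar - PLbar)
      have := abs_nonneg (PRbar + PLbar - 1)
      nlinarith
    · rw [hJdef, hSabs]
      nlinarith [abs_nonneg (PRbar - PLbar)]
  · constructor
    · intro hJ
      rw [hJdef, hSabs] at hJ
      have h1 : |PRbar - PLbar| = 0 ∧ A = 1 ∧ lam2 * (PRbar + PLbar - 1) = 0 := by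
        have hb := abs_nonneg (PRbar - PLbar)
        have hc : 0 ≤ lam2 * (PRbar + PLbar - 1) := mul_nonneg hlam2 (by linarith)
        constructor
        · nlinarith
        constructor
        · nlinarith
        · nlinarith
      obtain ⟨hb0, hA, _⟩ := h1
      have hbal : PRbar = PLbar := by
        have := abs_eq_zero.mp hb0; linarith
      refine ⟨hbal, ?_⟩
      -- from A = 1 and Σπ = 1: each |PR i - PL i| = 1
      have hsum0 : ∑ i, π i * (1 - |PR i - PL i|) = 0 := by
        rw [Finset.sum_congr rfl (fun i _ => by ring : ∀ i ∈ Finset.univ,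
          π i * (1 - |PR i - PL i|) = π i - π i * |PR i - PL i|)]
        rw [Finset.sum_sub_distrib, hπsum, ← hAdef, hA]
        ring
      have hall : ∀ i ∈ Finset.univ, π i * (1 - |PR i - PL i|) = 0 := by
        rw [← Finset.sum_eq_zero_iff_of_nonneg]
        · exact hsum0
        · intro i _
          exact mul_nonneg (hπ0 i) (by linarith [habs1 i])
      intro i
      have hi := hall i (Finset.mem_univ i)
      have habs : |PR i - PL i| = 1 := by
        rcases mul_eq_zero.mp hi with h | h
        · exact absurd h (ne_of_gt (hπpos i))
        · linarith
      rcases abs_eq (by norm_num : (0:ℝ) ≤ 1) |>.mp habs with h | h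
      · left; constructor <;> [linarith [(hPR i).2, (hPL i).1]; linarith [(hPR i).2, (hPL i).1]]
      · right; constructor <;> [linarith [(hPL i).2, (hPR i).1]; linarith [(hPL i).2, (hPR i).1]]
    · rintro ⟨hbal, hpure⟩
      have habs : ∀ i, |PR i - PL i| = 1 := by
        intro i
        rcases hpure i with ⟨h1, h2⟩ | ⟨h1, h2⟩ <;> rw [h1, h2] <;> norm_num
      have hS : ∀ i, PR i + PL i = 1 := by
        intro i
        rcases hpure i with ⟨h1, h2⟩ | ⟨h1, h2⟩ <;> rw [h1, h2] <;> norm_num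
      have hA : A = 1 := by
        rw [hAdef, Finset.sum_congr rfl fun i _ => by rw [habs i, mul_one], hπsum]
      have hSb : PRbar + PLbar = 1 := by
        rw [hSsum, Finset.sum_congr rfl fun i _ => by rw [hS i, mul_one], hπsum]
      rw [hJdef, hA, hSb, hbal]
      simp
end

section
/- Let M ≥ 2 and assume λ1 > 0, λ2 ≥ 0 with (M − 3)·λ1 < λ2, and assume π_i > 0 for every class i. Then for all admissible conditional probabilities P_j^i, the M-ary objective J satisfies J ≥ −λ1(M − 1), with equality if and only if the split is perfectly balanced and perfectly pure. If in addition λ1 ≥ 1, then J ≤ λ2(M − 1). -/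
open Finset

private lemma ldsm_pair_sum {M : ℕ} (hM : 1 ≤ M) (p : Fin M → ℝ) :
    ∑ j, ∑ l ∈ univ.filter (fun l => j < l), (p j + p l)
      = ((M : ℝ) - 1) * ∑ j, p j := by
  have hcard1 : ∀ j : Fin M, (univ.filter (fun l => j < l)).card = M - 1 - j := fun j => by
    rw [show univ.filter (fun l => j < l) = Ioi j from by ext; simp, Fin.card_Ioi]
  have hcard2 : ∀ j : Fin M, (univ.filter (fun l => l < j)).card = (j : ℕ) := fun j => by
    rw [show univ.filter (fun l => l < j) = Iio j from by ext; simp, Fin.card_Iio]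
  have h2 : ∑ j, ∑ l ∈ univ.filter (fun l => j < l), p l
      = ∑ l : Fin M, ((l : ℕ) : ℝ) * p l := by
    simp only [Finset.sum_filter]
    rw [Finset.sum_comm]
    refine Finset.sum_congr rfl fun l _ => ?_
    rw [← Finset.sum_filter, Finset.sum_const, hcard2, nsmul_eq_mul]
  have h1 : ∑ j, ∑ l ∈ univ.filter (fun l => j < l), (p j + p l)
      = ∑ j : Fin M, (((M - 1 - (j:ℕ) : ℕ) : ℝ) * p j + ((j : ℕ) : ℝ) * p j) := by
    rw [show (∑ j, ∑ l ∈ univ.filter (fun l => j < l), (p j + p l))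
        = (∑ j, ∑ l ∈ univ.filter (fun l => j < l), p j)
          + ∑ j, ∑ l ∈ univ.filter (fun l => j < l), p l from by
      rw [← Finset.sum_add_distrib]; exact Finset.sum_congr rfl fun j _ => by
        rw [← Finset.sum_add_distrib], h2, ← Finset.sum_add_distrib]
    refine Finset.sum_congr rfl fun j _ => ?_
    rw [Finset.sum_const, hcard1, nsmul_eq_mul]
  rw [h1, Finset.mul_sum]
  refine Finset.sum_congr rfl fun j _ => ?_
  have hj : (j : ℕ) ≤ M - 1 := Nat.le_sub_one_of_lt j.isLt
  have : ((M - 1 - (j:ℕ) : ℕ) : ℝ) = ((M:ℝ) - 1) - (j:ℕ) := by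
    rw [Nat.cast_sub hj, Nat.cast_sub hM]; push_cast; ring
  rw [this]; ring

private lemma ldsm_min_sum {M : ℕ} (hM : 1 ≤ M) (p : Fin M → ℝ)
    (h0 : ∀ j, 0 ≤ p j) (h1 : ∀ j, p j ≤ 1) :
    (∑ j, p j) - 1 ≤ ∑ j, ∑ l ∈ univ.filter (fun l => j < l), min (p j) (p l) := by
  have hne : (univ : Finset (Fin M)).Nonempty := by
    simpa [Finset.univ_nonempty_iff] using Fin.pos_iff_nonempty.mp hM
  obtain ⟨m, -, hm⟩ := Finset.exists_max_image univ p hne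
  set g : Fin M → ℝ := fun j => ∑ l ∈ univ.filter (fun l => j < l), min (p j) (p l) with hg
  have hgnn : ∀ j, 0 ≤ g j := fun j =>
    Finset.sum_nonneg fun l _ => le_min (h0 j) (h0 l)
  have hsplit : ∑ j, g j
      = ∑ j ∈ univ.filter (fun j => j < m), g j + ∑ j ∈ univ.filter (fun j => ¬ j < m), g j :=
    (Finset.sum_filter_add_sum_filter_not univ _ g).symm
  have h2 : g m ≤ ∑ j ∈ univ.filter (fun j => ¬ j < m), g j := by
    refine Finset.single_le_sum (fun j _ => hgnn j) ?_
    simp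
  have h3 : ∀ j ∈ univ.filter (fun j => j < m), p j ≤ g j := by
    intro j hj
    simp only [Finset.mem_filter] at hj
    have : min (p j) (p m) ≤ g j := by
      refine Finset.single_le_sum (f := fun l => min (p j) (p l))
        (fun l _ => le_min (h0 j) (h0 l)) ?_
      simp [hj.2]
    simpa [min_eq_left (hm j (mem_univ j))] using this
  have h4 : ∑ l ∈ univ.filter (fun l => m < l), p l = g m := by
    rw [hg]
    exact Finset.sum_congr rfl fun l hl => (min_eq_right (hm l (mem_univ l))).symm
  have hps : ∑ j, p j
      = ∑ j ∈ univ.filter (fun j => j < m), p j + ∑ j ∈ univ.filter (fun j => ¬ j < m), p j :=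
    (Finset.sum_filter_add_sum_filter_not univ _ p).symm
  have hps2 : ∑ j ∈ univ.filter (fun j => ¬ j < m), p j
      = p m + ∑ l ∈ univ.filter (fun l => m < l), p l := by
    have e1 : (univ.filter (fun j => ¬ j < m)).filter (fun j => m < j)
        = univ.filter (fun l => m < l) := by
      ext x; simp only [Finset.mem_filter, Finset.mem_univ, true_and, Fin.lt_def]
      omega
    have e2 : (univ.filter (fun j => ¬ j < m)).filter (fun j => ¬ m < j) = {m} := by
      ext x
      simp only [Finset.mem_filter, Finset.mem_univ, true_and, Finset.mem_singleton,
        Fin.lt_def, ← Fin.val_eq_val]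
      omega
    rw [← Finset.sum_filter_add_sum_filter_not (univ.filter (fun j => ¬ j < m)) (fun j => m < j) p,
      e1, e2, Finset.sum_singleton]
    ring
  calc (∑ j, p j) - 1
      ≤ (∑ j, p j) - p m := by linarith [h1 m]
    _ = ∑ j ∈ univ.filter (fun j => j < m), p j + ∑ l ∈ univ.filter (fun l => m < l), p l := by
        rw [hps, hps2]; ring
    _ ≤ ∑ j ∈ univ.filter (fun j => j < m), g j + g m := by
        exact add_le_add (Finset.sum_le_sum h3) h4.le
    _ ≤ ∑ j, g j := by rw [hsplit]; exact add_le_add (le_refl _) h2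

private lemma ldsm_abs_min (a b : ℝ) : |a - b| = a + b - 2 * min a b := by
  rcases le_total a b with h | h
  · rw [abs_of_nonpos (by linarith), min_eq_left h]; ring
  · rw [abs_of_nonneg (by linarith), min_eq_right h]; ring

/-- Minimum of the `M`-ary LdSM node objective.  Let `M ≥ 2`,
`λ1 > 0`, `λ2 ≥ 0` with `(M − 3)·λ1 < λ2`, and `π i > 0` for every class.
Then for all admissible conditional probabilities `P_j^i` the objective
satisfies `J ≥ −λ1(M − 1)`, with equality iff the split is perfectly balanced
(`P_1 = ⋯ = P_M`) and perfectly pure (every class is routed deterministically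
to a single child).  If in addition `λ1 ≥ 1`, then `J ≤ λ2(M − 1)`. -/
theorem ldsm_mary_objective_bounds_and_min
    (M K : ℕ) (hM : 2 ≤ M) (hK : 1 ≤ K)
    (lam1 lam2 : ℝ) (hlam1 : 0 < lam1) (hlam2 : 0 ≤ lam2)
    (hcond : ((M : ℝ) - 3) * lam1 < lam2)
    (π : Fin K → ℝ) (P : Fin K → Fin M → ℝ)
    (hπpos : ∀ i, 0 < π i) (hπle : ∀ i, π i ≤ 1) (hπsum : ∑ i, π i = 1)
    (hP : ∀ i j, P i j ∈ Set.Icc (0 : ℝ) 1)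
    (hrow : ∀ i, 1 ≤ ∑ j, P i j) :
    let Pbar : Fin M → ℝ := fun j => ∑ i, π i * P i j
    let J : ℝ :=
      (∑ j, ∑ l ∈ Finset.univ.filter (fun l => j < l), |Pbar j - Pbar l|)
      - lam1 * (∑ i, π i *
          (∑ j, ∑ l ∈ Finset.univ.filter (fun l => j < l), |P i j - P i l|))
      + lam2 * |(∑ j, Pbar j) - 1|
    (-(lam1 * ((M : ℝ) - 1)) ≤ J) ∧
      (J = -(lam1 * ((M : ℝ) - 1)) ↔
        ((∀ j l, Pbar j = Pbar l) ∧
          ∀ i, ∃ j, P i j = 1 ∧ ∀ l, l ≠ j → P i l = 0)) ∧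
      (1 ≤ lam1 → J ≤ lam2 * ((M : ℝ) - 1)) := by
  intro Pbar J
  have hM1 : 1 ≤ M := le_trans one_le_two hM
  have hP0 : ∀ i j, 0 ≤ P i j := fun i j => (hP i j).1
  have hP1 : ∀ i j, P i j ≤ 1 := fun i j => (hP i j).2
  -- abbreviations
  set s : Fin K → ℝ := fun i => ∑ j, P i j with hs
  set T : Fin K → ℝ :=
    fun i => ∑ j, ∑ l ∈ univ.filter (fun l => j < l), |P i j - P i l| with hT
  set A : Fin K → ℝ :=
    fun i => ∑ j, ∑ l ∈ univ.filter (fun l => j < l), min (P i j) (P i l) with hA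
  set D : ℝ := ∑ j, ∑ l ∈ univ.filter (fun l => j < l), |Pbar j - Pbar l| with hD
  have hJdef : J = D - lam1 * (∑ i, π i * T i) + lam2 * |(∑ j, Pbar j) - 1| := rfl
  have hs1 : ∀ i, 1 ≤ s i := hrow
  have hAnn : ∀ i, 0 ≤ A i := fun i =>
    Finset.sum_nonneg fun j _ => Finset.sum_nonneg fun l _ => le_min (hP0 i j) (hP0 i l)
  have hA1 : ∀ i, s i - 1 ≤ A i := fun i => ldsm_min_sum hM1 (P i) (hP0 i) (hP1 i)
  have hTi : ∀ i, T i = ((M : ℝ) - 1) * s i - 2 * A i := by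
    intro i
    have e1 : T i = (∑ j, ∑ l ∈ univ.filter (fun l => j < l), (P i j + P i l))
        - 2 * A i := by
      rw [hT, hA, Finset.mul_sum, ← Finset.sum_sub_distrib]
      refine Finset.sum_congr rfl fun j _ => ?_
      rw [Finset.mul_sum, ← Finset.sum_sub_distrib]
      exact Finset.sum_congr rfl fun l _ => ldsm_abs_min _ _
    rw [e1, ldsm_pair_sum hM1]
  have hDnn : 0 ≤ D :=
    Finset.sum_nonneg fun j _ => Finset.sum_nonneg fun l _ => abs_nonneg _
  -- sum over children of Pbar
  have hSwap : ∑ j, Pbar j = ∑ i, π i * s i := by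
    rw [Finset.sum_comm]
    exact Finset.sum_congr rfl fun i _ => (Finset.mul_sum _ _ _).symm
  have hS1 : 1 ≤ ∑ j, Pbar j := by
    rw [hSwap, ← hπsum]
    refine Finset.sum_le_sum fun i _ => ?_
    have h := mul_le_mul_of_nonneg_left (hs1 i) (hπpos i).le
    linarith
  have habsS : |(∑ j, Pbar j) - 1| = ∑ i, π i * (s i - 1) := by
    have e : ∑ i, π i * (s i - 1) = (∑ i, π i * s i) - 1 := by
      calc ∑ i, π i * (s i - 1) = ∑ i, (π i * s i - π i) :=
            Finset.sum_congr rfl fun i _ => by ring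
        _ = (∑ i, π i * s i) - ∑ i, π i := Finset.sum_sub_distrib _ _
        _ = (∑ i, π i * s i) - 1 := by rw [hπsum]
    rw [abs_of_nonneg (by linarith), hSwap, e]
  -- the slack terms
  set B : Fin K → ℝ := fun i =>
    lam1 * ((((M : ℝ) - 3)) * (s i - 1) + ((M : ℝ) - 1) - T i)
      + (lam2 - ((M : ℝ) - 3) * lam1) * (s i - 1) with hB
  have hTle : ∀ i, T i ≤ ((M : ℝ) - 3) * (s i - 1) + ((M : ℝ) - 1) := by
    intro i
    have h := hA1 i
    have := hTi i
    nlinarith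
  have hBnn : ∀ i, 0 ≤ B i := by
    intro i
    have h1 : 0 ≤ lam1 * ((((M : ℝ) - 3)) * (s i - 1) + ((M : ℝ) - 1) - T i) :=
      mul_nonneg hlam1.le (by linarith [hTle i])
    have h2 : 0 ≤ (lam2 - ((M : ℝ) - 3) * lam1) * (s i - 1) :=
      mul_nonneg (by linarith) (by linarith [hs1 i])
    rw [hB]; dsimp only; linarith
  have hexp : ∑ i, π i * B i
      = lam1 * ((M : ℝ) - 1) - lam1 * (∑ i, π i * T i)
        + lam2 * (∑ i, π i * (s i - 1)) := by
    have e : ∀ i : Fin K, π i * B i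
        = lam1 * ((M : ℝ) - 1) * π i - lam1 * (π i * T i)
          + lam2 * (π i * (s i - 1)) := fun i => by rw [hB]; ring
    rw [Finset.sum_congr rfl fun i _ => e i]
    rw [Finset.sum_add_distrib, Finset.sum_sub_distrib, ← Finset.mul_sum,
      ← Finset.mul_sum, ← Finset.mul_sum, hπsum]
    ring
  have hkey : J = D + (∑ i, π i * B i) - lam1 * ((M : ℝ) - 1) := by
    rw [hJdef, habsS, hexp]; ring
  have hsumBnn : 0 ≤ ∑ i, π i * B i :=
    Finset.sum_nonneg fun i _ => mul_nonneg (hπpos i).le (hBnn i)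
  refine ⟨by rw [hkey]; linarith, ⟨?_, ?_⟩, ?_⟩
  · -- equality → balanced & pure
    intro hJeq
    have hzero : D + (∑ i, π i * B i) = 0 := by
      rw [hkey] at hJeq; linarith
    have hD0 : D = 0 := by linarith
    have hB0sum : ∑ i, π i * B i = 0 := by linarith
    constructor
    · -- balanced
      have hD0' : ∑ j, ∑ l ∈ univ.filter (fun l => j < l), |Pbar j - Pbar l| = 0 := by
        rw [← hD]; exact hD0
      have hpair : ∀ j, ∀ l ∈ univ.filter (fun l => j < l), |Pbar j - Pbar l| = 0 := by
        intro j l hl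
        have hj0 : ∑ l ∈ univ.filter (fun l => j < l), |Pbar j - Pbar l| = 0 :=
          (Finset.sum_eq_zero_iff_of_nonneg
            (fun j _ => Finset.sum_nonneg fun l _ => abs_nonneg (Pbar j - Pbar l))).mp hD0' j (mem_univ j)
        exact (Finset.sum_eq_zero_iff_of_nonneg (fun l _ => abs_nonneg _)).mp hj0 l hl
      have hlt : ∀ j l : Fin M, j < l → Pbar j = Pbar l := by
        intro j l hjl
        have := hpair j l (by simp [hjl])
        have := abs_eq_zero.mp this
        linarith
      intro j l
      rcases lt_trichotomy j l with h | h | h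
      · exact hlt j l h
      · rw [h]
      · exact (hlt l j h).symm
    · -- pure
      intro i
      have hBi0 : B i = 0 := by
        have h := (Finset.sum_eq_zero_iff_of_nonneg
          (fun i _ => mul_nonneg (hπpos i).le (hBnn i))).mp hB0sum i (mem_univ i)
        rcases mul_eq_zero.mp h with h' | h'
        · exact absurd h' (hπpos i).ne'
        · exact h'
      have hsi : s i = 1 := by
        have h1 : 0 ≤ lam1 * ((((M : ℝ) - 3)) * (s i - 1) + ((M : ℝ) - 1) - T i) :=
          mul_nonneg hlam1.le (by linarith [hTle i])
        have h2 : 0 ≤ (lam2 - ((M : ℝ) - 3) * lam1) * (s i - 1) :=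
          mul_nonneg (by linarith) (by linarith [hs1 i])
        have h3 : (lam2 - ((M : ℝ) - 3) * lam1) * (s i - 1) = 0 := by
          rw [hB] at hBi0; dsimp only at hBi0; linarith
        rcases mul_eq_zero.mp h3 with h' | h'
        · exfalso; linarith
        · linarith
      have hTieq : T i = (M : ℝ) - 1 := by
        have h2 : (lam2 - ((M : ℝ) - 3) * lam1) * (s i - 1) = 0 := by rw [hsi]; ring
        have : lam1 * ((((M : ℝ) - 3)) * (s i - 1) + ((M : ℝ) - 1) - T i) = 0 := by
          rw [hB] at hBi0; dsimp only at hBi0; linarith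
        have h4 : (((M : ℝ) - 3)) * (s i - 1) + ((M : ℝ) - 1) - T i = 0 := by
          rcases mul_eq_zero.mp this with h' | h'
          · exact absurd h' hlam1.ne'
          · exact h'
        rw [hsi] at h4; linarith
      have hAi0 : A i = 0 := by
        have := hTi i
        rw [hsi, hTieq] at this
        linarith
      have hmin0 : ∀ j l : Fin M, j < l → min (P i j) (P i l) = 0 := by
        intro j l hjl
        have hj0 := (Finset.sum_eq_zero_iff_of_nonneg
          (fun j _ => Finset.sum_nonneg fun l _ => le_min (hP0 i j) (hP0 i l))).mp hAi0 j (mem_univ j)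
        exact (Finset.sum_eq_zero_iff_of_nonneg
          (fun l hl => le_min (hP0 i j) (hP0 i l))).mp hj0 l (by simp [hjl])
      have hmin0' : ∀ j l : Fin M, j ≠ l → min (P i j) (P i l) = 0 := by
        intro j l hjl
        rcases lt_or_gt_of_ne hjl with h | h
        · exact hmin0 j l h
        · rw [min_comm]; exact hmin0 l j h
      -- there is a positive entry
      have hex : ∃ j, P i j ≠ 0 := by
        by_contra h
        push_neg at h
        have : s i = 0 := Finset.sum_eq_zero fun j _ => h j
        rw [hsi] at this; norm_num at this
      obtain ⟨j0, hj0⟩ := hex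
      have hj0pos : 0 < P i j0 := lt_of_le_of_ne (hP0 i j0) (Ne.symm hj0)
      have hzero' : ∀ l, l ≠ j0 → P i l = 0 := by
        intro l hl
        have := hmin0' j0 l (Ne.symm hl)
        rcases min_cases (P i j0) (P i l) with ⟨h1, h2⟩ | ⟨h1, h2⟩
        · rw [this] at h1; exfalso; exact hj0 h1.symm
        · rw [this] at h1; exact h1.symm
      refine ⟨j0, ?_, hzero'⟩
      have : s i = P i j0 := by
        show ∑ j, P i j = P i j0
        exact Finset.sum_eq_single j0 (fun l _ hl => hzero' l hl) (fun h => absurd (mem_univ j0) h)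
      rw [← this, hsi]
  · -- balanced & pure → equality
    rintro ⟨hbal, hpure⟩
    have hD0 : D = 0 :=
      Finset.sum_eq_zero fun j _ => Finset.sum_eq_zero fun l _ => by
        rw [hbal j l]; simp
    have hBi0 : ∀ i, B i = 0 := by
      intro i
      obtain ⟨j0, hj1, hj0⟩ := hpure i
      have hsi : s i = 1 := by
        show ∑ j, P i j = 1
        rw [Finset.sum_eq_single j0 (fun l _ hl => hj0 l hl) (fun h => absurd (mem_univ j0) h)]
        exact hj1
      have hAi0 : A i = 0 := by
        rw [hA]
        refine Finset.sum_eq_zero fun j _ => Finset.sum_eq_zero fun l hl => ?_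
        simp only [Finset.mem_filter] at hl
        rcases eq_or_ne j j0 with rfl | hj
        · rw [hj0 l ((ne_of_lt hl.2).symm)]
          exact min_eq_right (hP0 i j)
        · rw [hj0 j hj]
          exact min_eq_left (hP0 i l)
      have hTieq : T i = (M : ℝ) - 1 := by
        rw [hTi i, hsi, hAi0]; ring
      rw [hB]; dsimp only; rw [hsi, hTieq]; ring
    rw [hkey, hD0]
    rw [Finset.sum_eq_zero fun i _ => by rw [hBi0 i, mul_zero]]
    ring
  · -- upper bound
    intro hlam1'
    have hTnn : ∀ i, 0 ≤ T i := fun i =>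
      Finset.sum_nonneg fun j _ => Finset.sum_nonneg fun l _ => abs_nonneg _
    have hWnn : 0 ≤ ∑ i, π i * T i :=
      Finset.sum_nonneg fun i _ => mul_nonneg (hπpos i).le (hTnn i)
    have hDW : D ≤ ∑ i, π i * T i := by
      have step1 : ∀ j l : Fin M, |Pbar j - Pbar l| ≤ ∑ i, π i * |P i j - P i l| := by
        intro j l
        have : Pbar j - Pbar l = ∑ i, π i * (P i j - P i l) := by
          rw [← Finset.sum_sub_distrib]
          exact Finset.sum_congr rfl fun i _ => by ring
        rw [this]
        calc |∑ i, π i * (P i j - P i l)| ≤ ∑ i, |π i * (P i j - P i l)| :=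
              Finset.abs_sum_le_sum_abs _ _
          _ = ∑ i, π i * |P i j - P i l| :=
              Finset.sum_congr rfl fun i _ => by
                rw [abs_mul, abs_of_nonneg (hπpos i).le]
      have step2 : ∑ i, π i * T i
          = ∑ j, ∑ l ∈ univ.filter (fun l => j < l), ∑ i, π i * |P i j - P i l| := by
        rw [hT]
        rw [show (∑ i, π i * ∑ j, ∑ l ∈ univ.filter (fun l => j < l), |P i j - P i l|)
            = ∑ i : Fin K, ∑ j : Fin M, ∑ l ∈ univ.filter (fun l => j < l),
                π i * |P i j - P i l| from
          Finset.sum_congr rfl fun i _ => by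
            rw [Finset.mul_sum]
            exact Finset.sum_congr rfl fun j _ => Finset.mul_sum _ _ _]
        rw [Finset.sum_comm]
        exact Finset.sum_congr rfl fun j _ => Finset.sum_comm
      rw [hD, step2]
      exact Finset.sum_le_sum fun j _ => Finset.sum_le_sum fun l _ => step1 j l
    have hPbarle : ∀ j, Pbar j ≤ 1 := by
      intro j
      calc Pbar j = ∑ i, π i * P i j := rfl
        _ ≤ ∑ i, π i := Finset.sum_le_sum fun i _ => by
            nlinarith [hπpos i, hP1 i j, hP0 i j]
        _ = 1 := hπsum
    have hSM : ∑ j, Pbar j ≤ (M : ℝ) := by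
      calc ∑ j, Pbar j ≤ ∑ j : Fin M, (1 : ℝ) := Finset.sum_le_sum fun j _ => hPbarle j
        _ = (M : ℝ) := by simp
    have habs : |(∑ j, Pbar j) - 1| = (∑ j, Pbar j) - 1 := abs_of_nonneg (by linarith)
    rw [hJdef, habs]
    have h1 : D - lam1 * (∑ i, π i * T i) ≤ 0 := by nlinarith
    have h2 : lam2 * ((∑ j, Pbar j) - 1) ≤ lam2 * ((M : ℝ) - 1) :=
      mul_le_mul_of_nonneg_left (by linarith) hlam2
    linarith
end

section
/- If the node split is perfectly pure, then β ≤ J − J*, where J* = −λ1(M − 1) is the minimum possible value of the objective. Equivalently, for a perfectly pure split one has Σ_{i=1}^K π_i Σ_{1≤j<l≤M} |P_j^i − P_l^i| = M − 1 and |(Σ_{j=1}^M P_j) − 1| = 0, so J − J* equals the balancing term Σ_{1≤j<l≤M} |P_j − P_l|, and this term is at least β. -/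
private lemma ldsm_aux_indicator_pair_sum (M : ℕ) (hM : 1 ≤ M) (a : Fin M → ℝ) (j0 : Fin M)
    (h1 : a j0 = 1) (h0 : ∀ l, l ≠ j0 → a l = 0) :
    (∑ j, ∑ l ∈ Finset.univ.filter (fun l => j < l), |a j - a l|) = (M : ℝ) - 1 := by
  have hterm : ∀ j l : Fin M, j < l →
      |a j - a l| = (if j = j0 then (1:ℝ) else 0) + (if l = j0 then (1:ℝ) else 0) := by
    intro j l hjl
    have hne : j ≠ l := ne_of_lt hjl
    by_cases hj : j = j0 <;> by_cases hl : l = j0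
    · exact absurd (hj.trans hl.symm) hne
    · simp [h1, h0 l hl, hj, hl]
    · simp [h1, h0 j hj, hj, hl]
    · simp [h0 j hj, h0 l hl, hj, hl]
  have hrw : (∑ j, ∑ l ∈ Finset.univ.filter (fun l => j < l), |a j - a l|)
      = (∑ j, ∑ l ∈ Finset.univ.filter (fun l => j < l),
          ((if j = j0 then (1:ℝ) else 0) + (if l = j0 then (1:ℝ) else 0))) := by
    refine Finset.sum_congr rfl fun j _ => Finset.sum_congr rfl fun l hl => ?_
    exact hterm j l (Finset.mem_filter.mp hl).2
  rw [hrw]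
  simp only [Finset.sum_add_distrib]
  have hA : (∑ j : Fin M, ∑ _l ∈ Finset.univ.filter (fun l => j < l), (if j = j0 then (1:ℝ) else 0))
      = (Finset.univ.filter (fun l => j0 < l)).card := by
    simp only [Finset.sum_const, nsmul_eq_mul, mul_ite, mul_one, mul_zero]
    rw [Finset.sum_ite_eq' Finset.univ j0 (fun j => ((Finset.univ.filter (fun l => j < l)).card : ℝ))]
    simp
  have hB : (∑ j : Fin M, ∑ l ∈ Finset.univ.filter (fun l => j < l), (if l = j0 then (1:ℝ) else 0))
      = (Finset.univ.filter (fun l => l < j0)).card := by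
    have : ∀ j : Fin M, (∑ l ∈ Finset.univ.filter (fun l => j < l), (if l = j0 then (1:ℝ) else 0))
        = if j < j0 then (1:ℝ) else 0 := by
      intro j
      rw [Finset.sum_ite_eq' (Finset.univ.filter (fun l => j < l)) j0 (fun _ => (1:ℝ))]
      simp
    simp only [this]
    rw [Finset.sum_ite, Finset.sum_const, Finset.sum_const]
    simp
  rw [hA, hB]
  have hcard : (Finset.univ.filter (fun l => j0 < l)).card
      + (Finset.univ.filter (fun l => l < j0)).card = M - 1 := by
    have h : (Finset.univ.filter (fun l => j0 < l)) ∪ (Finset.univ.filter (fun l => l < j0))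
        = Finset.univ.erase j0 := by
      ext l
      simp [Finset.mem_erase, ← ne_iff_lt_or_gt, ne_comm, or_comm]
    have hd : Disjoint (Finset.univ.filter (fun l => j0 < l))
        (Finset.univ.filter (fun l => l < j0)) := by
      simp only [Finset.disjoint_filter]
      exact fun l _ h1 => not_lt_of_gt h1
    calc _ = ((Finset.univ.filter (fun l => j0 < l)) ∪ (Finset.univ.filter (fun l => l < j0))).card :=
          (Finset.card_union_of_disjoint hd).symm
      _ = (Finset.univ.erase j0).card := by rw [h]
      _ = M - 1 := by
          rw [Finset.card_erase_of_mem (Finset.mem_univ _), Finset.card_univ, Fintype.card_fin]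
  have := congrArg (fun n : ℕ => (n : ℝ)) hcard
  push_cast [Nat.cast_sub hM] at this
  linarith

private lemma ldsm_aux_row_le_pairs (M : ℕ) (b : Fin M → ℝ) (j : Fin M) :
    (∑ l, |b j - b l|) ≤ ∑ j', ∑ l ∈ Finset.univ.filter (fun l => j' < l), |b j' - b l| := by
  set S1 := Finset.univ.filter (fun l => l < j) with hS1
  set S2 := Finset.univ.filter (fun l => j < l) with hS2
  have hd : Disjoint S2 S1 := by
    simp only [hS1, hS2, Finset.disjoint_filter]
    exact fun l _ h1 => not_lt_of_gt h1
  have hunion : S2 ∪ S1 = Finset.univ.erase j := by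
    ext l
    simp only [hS1, hS2, Finset.mem_union, Finset.mem_filter, Finset.mem_univ, true_and,
      Finset.mem_erase, and_true]
    rw [← ne_iff_lt_or_gt, ne_comm]
  have hsplit : (∑ l, |b j - b l|)
      = (∑ l ∈ S2, |b j - b l|) + ∑ l ∈ S1, |b j - b l| := by
    rw [← Finset.add_sum_erase Finset.univ _ (Finset.mem_univ j), ← hunion,
      Finset.sum_union hd]
    simp
  rw [hsplit]
  have h2 : (∑ l ∈ S2, |b j - b l|)
      = ∑ l ∈ Finset.univ.filter (fun l => j < l), |b j - b l| := rfl
  have h1 : (∑ l ∈ S1, |b j - b l|)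
      ≤ ∑ l ∈ S1, ∑ l' ∈ Finset.univ.filter (fun l' => l < l'), |b l - b l'| := by
    refine Finset.sum_le_sum fun l hl => ?_
    have hlj : l < j := (Finset.mem_filter.mp hl).2
    calc |b j - b l| = |b l - b j| := abs_sub_comm _ _
      _ ≤ _ := Finset.single_le_sum (f := fun l' => |b l - b l'|) (fun _ _ => abs_nonneg _)
          (Finset.mem_filter.mpr ⟨Finset.mem_univ _, hlj⟩)
  have hjS1 : j ∉ S1 := by simp [hS1, Finset.mem_filter]
  calc (∑ l ∈ S2, |b j - b l|) + ∑ l ∈ S1, |b j - b l|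
      ≤ (∑ l' ∈ Finset.univ.filter (fun l' => j < l'), |b j - b l'|)
        + ∑ l ∈ S1, ∑ l' ∈ Finset.univ.filter (fun l' => l < l'), |b l - b l'| := by
        rw [h2]; exact add_le_add le_rfl h1
    _ = ∑ l ∈ insert j S1, ∑ l' ∈ Finset.univ.filter (fun l' => l < l'), |b l - b l'| := by
        rw [Finset.sum_insert hjS1]
    _ ≤ _ := by
        refine Finset.sum_le_sum_of_subset_of_nonneg (Finset.subset_univ _) ?_
        exact fun i _ _ => Finset.sum_nonneg fun _ _ => abs_nonneg _

/-- If the node split is perfectly pure (every class is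
routed deterministically to exactly one child) then
`Σ_i π_i Σ_{j<l} |P_j^i − P_l^i| = M − 1` and `|(Σ_j P_j) − 1| = 0`, so that
`J − J*` (with `J* = −λ1(M−1)` the minimum possible objective value) equals
the balancing term `Σ_{j<l} |P_j − P_l|`, and the balancedness factor
`β = max_j |P_j − (Σ_l P_l)/M|` satisfies `β ≤ J − J*`. -/
theorem ldsm_pure_split_beta_le_J_sub_Jstar
    (M K : ℕ) (hM : 2 ≤ M) (hK : 1 ≤ K)
    (lam1 lam2 : ℝ) (hlam1 : 0 ≤ lam1) (hlam2 : 0 ≤ lam2)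
    (π : Fin K → ℝ) (P : Fin K → Fin M → ℝ)
    (hπ0 : ∀ i, 0 ≤ π i) (hπle : ∀ i, π i ≤ 1) (hπsum : ∑ i, π i = 1)
    (hP : ∀ i j, P i j ∈ Set.Icc (0 : ℝ) 1)
    (hpure : ∀ i, ∃ j, P i j = 1 ∧ ∀ l, l ≠ j → P i l = 0) :
    let Pbar : Fin M → ℝ := fun j => ∑ i, π i * P i j
    let J : ℝ :=
      (∑ j, ∑ l ∈ Finset.univ.filter (fun l => j < l), |Pbar j - Pbar l|)
      - lam1 * (∑ i, π i *
          (∑ j, ∑ l ∈ Finset.univ.filter (fun l => j < l), |P i j - P i l|))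
      + lam2 * |(∑ j, Pbar j) - 1|
    let Jstar : ℝ := -(lam1 * ((M : ℝ) - 1))
    let β : ℝ := Finset.univ.sup' ⟨⟨0, by omega⟩, Finset.mem_univ _⟩
      (fun j => |Pbar j - (∑ l, Pbar l) / (M : ℝ)|)
    (∑ i, π i *
        (∑ j, ∑ l ∈ Finset.univ.filter (fun l => j < l), |P i j - P i l|))
      = (M : ℝ) - 1 ∧
    |(∑ j, Pbar j) - 1| = 0 ∧
    J - Jstar
      = (∑ j, ∑ l ∈ Finset.univ.filter (fun l => j < l), |Pbar j - Pbar l|) ∧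
    β ≤ J - Jstar := by
  intro Pbar J Jstar β
  have hM1 : 1 ≤ M := by omega
  -- Part 1
  have e1 : (∑ i, π i *
      (∑ j, ∑ l ∈ Finset.univ.filter (fun l => j < l), |P i j - P i l|)) = (M : ℝ) - 1 := by
    have hinner : ∀ i,
        (∑ j, ∑ l ∈ Finset.univ.filter (fun l => j < l), |P i j - P i l|) = (M : ℝ) - 1 := by
      intro i
      obtain ⟨j0, hj1, hj0⟩ := hpure i
      exact ldsm_aux_indicator_pair_sum M hM1 (P i) j0 hj1 hj0
    calc (∑ i, π i * (∑ j, ∑ l ∈ Finset.univ.filter (fun l => j < l), |P i j - P i l|))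
        = ∑ i, π i * ((M : ℝ) - 1) := by
          exact Finset.sum_congr rfl fun i _ => by rw [hinner i]
      _ = (∑ i, π i) * ((M : ℝ) - 1) := by rw [Finset.sum_mul]
      _ = (M : ℝ) - 1 := by rw [hπsum]; ring
  -- sum of Pbar is 1
  have hsum : (∑ j, Pbar j) = 1 := by
    have hrow : ∀ i, (∑ j, P i j) = 1 := by
      intro i
      obtain ⟨j0, hj1, hj0⟩ := hpure i
      rw [Finset.sum_eq_single_of_mem j0 (Finset.mem_univ _) (fun l _ hl => hj0 l hl)]
      exact hj1
    calc (∑ j, Pbar j) = ∑ j, ∑ i, π i * P i j := rfl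
      _ = ∑ i, ∑ j, π i * P i j := Finset.sum_comm
      _ = ∑ i, π i * ∑ j, P i j := by
          exact Finset.sum_congr rfl fun i _ => (Finset.mul_sum _ _ _).symm
      _ = ∑ i, π i := by
          exact Finset.sum_congr rfl fun i _ => by rw [hrow i, mul_one]
      _ = 1 := hπsum
  have e2 : |(∑ j, Pbar j) - 1| = 0 := by rw [hsum]; simp
  -- Part 3
  have e3 : J - Jstar
      = (∑ j, ∑ l ∈ Finset.univ.filter (fun l => j < l), |Pbar j - Pbar l|) := by
    simp only [J, Jstar]
    rw [e1, e2]
    ring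
  refine ⟨e1, e2, e3, ?_⟩
  -- Part 4
  rw [e3]
  apply Finset.sup'_le
  intro j _
  have hMpos : (0:ℝ) < (M:ℝ) := by
    have : (0:ℕ) < M := by omega
    exact_mod_cast this
  have hM1R : (1:ℝ) ≤ (M:ℝ) := by exact_mod_cast hM1
  have key : Pbar j - (∑ l, Pbar l) / (M:ℝ) = (∑ l, (Pbar j - Pbar l)) / (M:ℝ) := by
    rw [Finset.sum_sub_distrib, Finset.sum_const, hsum, Finset.card_univ, Fintype.card_fin,
      nsmul_eq_mul]
    field_simp
  calc |Pbar j - (∑ l, Pbar l) / (M:ℝ)|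
      = |∑ l, (Pbar j - Pbar l)| / (M:ℝ) := by rw [key, abs_div, abs_of_pos hMpos]
    _ ≤ (∑ l, |Pbar j - Pbar l|) / (M:ℝ) := by
        gcongr
        exact Finset.abs_sum_le_sum_abs _ _
    _ ≤ ∑ l, |Pbar j - Pbar l| :=
        div_le_self (Finset.sum_nonneg fun _ _ => abs_nonneg _) hM1R
    _ ≤ _ := ldsm_aux_row_le_pairs M Pbar j
end

section
/- Let M ≥ 2 be an integer, λ1 > 0, λ2 ≥ 0, and suppose (M − 3)·λ1 < λ2. Then for every integer n with 2 ≤ n ≤ M, one has −λ1(M − 1) < −λ1·n(M − n) + λ2·(n − 1). -/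
/-- Let `M ≥ 2` be an integer, `λ1 > 0`, `λ2 ≥ 0`, and
suppose `(M − 3)·λ1 < λ2`.  Then for every integer `n` with `2 ≤ n ≤ M`,
`−λ1(M − 1) < −λ1·n(M − n) + λ2·(n − 1)`. -/
theorem ldsm_pure_configuration_strictly_better
    (M n : ℕ) (hM : 2 ≤ M) (hn2 : 2 ≤ n) (hnM : n ≤ M)
    (lam1 lam2 : ℝ) (hlam1 : 0 < lam1) (hlam2 : 0 ≤ lam2)
    (hcond : ((M : ℝ) - 3) * lam1 < lam2) :
    -(lam1 * ((M : ℝ) - 1))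
      < -(lam1 * (n : ℝ) * ((M : ℝ) - (n : ℝ))) + lam2 * ((n : ℝ) - 1) := by
  have hn : (2:ℝ) ≤ (n:ℝ) := by exact_mod_cast hn2
  have hnM' : (n:ℝ) ≤ (M:ℝ) := by exact_mod_cast hnM
  nlinarith [mul_pos hlam1 (by linarith : (0:ℝ) < (n:ℝ) - 1),
    mul_le_mul_of_nonneg_left (by linarith : (M:ℝ) - (n:ℝ) - 1 ≤ (M:ℝ) - 3) hlam1.le,
    mul_nonneg hlam2 (by linarith : (0:ℝ) ≤ (n:ℝ) - 2),
    mul_lt_mul_of_pos_right hcond (by linarith : (0:ℝ) < (n:ℝ) - 1)]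
end

section
/- Let q and s be probability distributions on a finite set of size K, let θ ∈ [0,1], and let H(p) = Σ_{i=1}^K p_i ln(1/p_i) denote the Shannon entropy (with the convention 0·ln(1/0) = 0). Then H(θq + (1−θ)s) − θH(q) − (1−θ)H(s) ≥ (θ(1−θ)/2)·(Σ_{i=1}^K |q_i − s_i|)². In particular, for θ = 1/2, H((q+s)/2) − (1/2)H(q) − (1/2)H(s) ≥ (1/8)·‖q − s‖_1². -/
open Real Finset



noncomputable def Ffun : ℝ → ℝ := fun x => x * Real.log x - x + 1 - 3*(x-1)^2/(2*x+4)
noncomputable def Gfun : ℝ → ℝ := fun x => Real.log x - 6*(x-1)*(x+5)/(2*x+4)^2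

lemma hasDerivAt_G {x : ℝ} (hx : 0 < x) :
    HasDerivAt Gfun (1/x - 27/((x+2)^3)) x := by
  have hv : (2*x+4) ≠ 0 := by nlinarith
  have h1 : HasDerivAt Real.log (1/x) x := by
    simpa [one_div] using Real.hasDerivAt_log hx.ne'
  have hu : HasDerivAt (fun x : ℝ => 6*(x-1)*(x+5)) (6*(x-1) + 6*(x+5)) x := by
    have := ((hasDerivAt_id x).sub_const 1).const_mul 6 |>.mul ((hasDerivAt_id x).add_const 5)
    exact this.congr_deriv (by simp only [id_eq]; ring)
  have hv' : HasDerivAt (fun x : ℝ => (2*x+4)^2) (2*(2*x+4)*2) x := by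
    have h := (((hasDerivAt_id x).const_mul 2).add_const 4).pow 2
    exact h.congr_deriv (by simp only [id_eq]; ring)
  have h2 : HasDerivAt (fun x : ℝ => 6*(x-1)*(x+5)/(2*x+4)^2)
      (((6*(x-1) + 6*(x+5)) * (2*x+4)^2 - 6*(x-1)*(x+5) * (2*(2*x+4)*2)) / ((2*x+4)^2)^2) x :=
    hu.div hv' (pow_ne_zero 2 hv)
  have := h1.sub h2
  refine this.congr_deriv ?_
  have hx2 : (x+2) ≠ 0 := by nlinarith
  field_simp
  ring

lemma hasDerivAt_F {x : ℝ} (hx : 0 < x) : HasDerivAt Ffun (Gfun x) x := by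
  have hv : (2*x+4) ≠ 0 := by nlinarith
  have h1 : HasDerivAt (fun x : ℝ => x * Real.log x) (Real.log x + 1) x :=
    Real.hasDerivAt_mul_log hx.ne'
  have hu : HasDerivAt (fun x : ℝ => 3*(x-1)^2) (3*(2*(x-1))) x := by
    have := (((hasDerivAt_id x).sub_const 1).pow 2).const_mul 3
    simpa [mul_comm, mul_assoc] using this
  have hv' : HasDerivAt (fun x : ℝ => 2*x+4) 2 x := by
    simpa using ((hasDerivAt_id x).const_mul 2).add_const 4
  have h2 : HasDerivAt (fun x : ℝ => 3*(x-1)^2/(2*x+4))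
      ((3*(2*(x-1)) * (2*x+4) - 3*(x-1)^2 * 2) / (2*x+4)^2) x := hu.div hv' hv
  have h3 := ((h1.sub (hasDerivAt_id x)).add_const 1).sub h2
  refine h3.congr_deriv ?_
  unfold Gfun
  field_simp
  ring

lemma G_deriv_nonneg {x : ℝ} (hx : 0 < x) : 0 ≤ 1/x - 27/((x+2)^3) := by
  have h2 : (0:ℝ) < (x+2)^3 := by positivity
  rw [sub_nonneg, div_le_div_iff₀ h2 hx]
  nlinarith [sq_nonneg (x-1), mul_nonneg (mul_nonneg (sq_nonneg (x-1)) hx.le) hx.le,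
    mul_nonneg (sq_nonneg (x-1)) hx.le]

lemma G_mono : MonotoneOn Gfun (Set.Ioi 0) := by
  apply monotoneOn_of_deriv_nonneg (convex_Ioi 0)
  · exact fun y hy => ((hasDerivAt_G (Set.mem_Ioi.mp hy)).continuousAt).continuousWithinAt
  · intro y hy
    rw [interior_Ioi] at hy
    exact (hasDerivAt_G hy).differentiableAt.differentiableWithinAt
  · intro y hy
    rw [interior_Ioi] at hy
    rw [(hasDerivAt_G hy).deriv]
    exact G_deriv_nonneg hy

lemma G_one : Gfun 1 = 0 := by simp [Gfun]

lemma G_sign {x : ℝ} (hx : 0 < x) : (1 ≤ x → 0 ≤ Gfun x) ∧ (x ≤ 1 → Gfun x ≤ 0) := by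
  constructor
  · intro h
    have := G_mono (Set.mem_Ioi.mpr one_pos) (Set.mem_Ioi.mpr hx) h
    rwa [G_one] at this
  · intro h
    have := G_mono (Set.mem_Ioi.mpr hx) (Set.mem_Ioi.mpr one_pos) h
    rwa [G_one] at this

lemma F_one : Ffun 1 = 0 := by norm_num [Ffun]

lemma F_nonneg {x : ℝ} (hx : 0 < x) : 0 ≤ Ffun x := by
  rcases le_total 1 x with h | h
  · have hmono : MonotoneOn Ffun (Set.Icc 1 x) := by
      apply monotoneOn_of_deriv_nonneg (convex_Icc 1 x)
      · intro y hy
        exact ((hasDerivAt_F (lt_of_lt_of_le one_pos hy.1)).continuousAt).continuousWithinAt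
      · intro y hy
        have hy' := interior_subset hy
        exact (hasDerivAt_F (lt_of_lt_of_le one_pos hy'.1)).differentiableAt.differentiableWithinAt
      · intro y hy
        have hy' := interior_subset hy
        have hy0 : 0 < y := lt_of_lt_of_le one_pos hy'.1
        rw [(hasDerivAt_F hy0).deriv]
        exact (G_sign hy0).1 hy'.1
    have := hmono (Set.left_mem_Icc.mpr h) (Set.right_mem_Icc.mpr h) h
    rwa [F_one] at this
  · have hmono : AntitoneOn Ffun (Set.Icc x 1) := by
      apply antitoneOn_of_deriv_nonpos (convex_Icc x 1)
      · intro y hy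
        exact ((hasDerivAt_F (lt_of_lt_of_le hx hy.1)).continuousAt).continuousWithinAt
      · intro y hy
        have hy' := interior_subset hy
        exact (hasDerivAt_F (lt_of_lt_of_le hx hy'.1)).differentiableAt.differentiableWithinAt
      · intro y hy
        have hy' := interior_subset hy
        have hy0 : 0 < y := lt_of_lt_of_le hx hy'.1
        rw [(hasDerivAt_F hy0).deriv]
        exact (G_sign hy0).2 hy'.2
    have := hmono (Set.left_mem_Icc.mpr h) (Set.right_mem_Icc.mpr h) h
    rwa [F_one] at this

lemma kl_pointwise {a b : ℝ} (ha : 0 ≤ a) (hb : 0 < b) :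
    3*(a-b)^2/(2*a+4*b) ≤ a * Real.log (a/b) - a + b := by
  have hF := F_nonneg (x := a/b) -- need a > 0
  rcases eq_or_lt_of_le ha with h0 | ha'
  · simp only [← h0, zero_mul, zero_sub, neg_add_eq_sub]
    rw [div_le_iff₀ (by linarith)]
    nlinarith
  · have hx : 0 < a/b := div_pos ha' hb
    have h := F_nonneg hx
    unfold Ffun at h
    have hb' : b ≠ 0 := hb.ne'
    have key : b * (a/b * Real.log (a/b) - a/b + 1 - 3*(a/b-1)^2/(2*(a/b)+4)) =
        (a * Real.log (a/b) - a + b) - 3*(a-b)^2/(2*a+4*b) := by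
      have h24 : 2*(a/b)+4 ≠ 0 := by positivity
      have h24' : 2*a+4*b ≠ 0 := by positivity
      field_simp
    nlinarith [mul_nonneg hb.le h]



lemma pinsker (K : ℕ) (p m : Fin K → ℝ)
    (hp0 : ∀ i, 0 ≤ p i) (hpsum : ∑ i, p i = 1)
    (hm0 : ∀ i, 0 ≤ m i) (hmsum : ∑ i, m i = 1)
    (h0 : ∀ i, m i = 0 → p i = 0) :
    (∑ i, |p i - m i|)^2 / 2 ≤ ∑ i, (p i * Real.log (p i / m i) - p i + m i) := by
  classical
  set T : Finset (Fin K) := Finset.univ.filter (fun i => 0 < m i) with hT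
  have hmemT : ∀ i, i ∈ T ↔ 0 < m i := by
    intro i; simp [hT]
  have hzero : ∀ i, i ∉ T → p i = 0 ∧ m i = 0 := by
    intro i hi
    have : ¬ 0 < m i := by simpa [hT] using hi
    have hm : m i = 0 := le_antisymm (not_lt.mp this) (hm0 i)
    exact ⟨h0 i hm, hm⟩
  have hV : ∑ i, |p i - m i| = ∑ i ∈ T, |p i - m i| := by
    refine (Finset.sum_subset (Finset.subset_univ T) ?_).symm
    intro i _ hi
    rcases hzero i hi with ⟨h1, h2⟩
    simp [h1, h2]
  have hkl : ∑ i, (p i * Real.log (p i / m i) - p i + m i)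
      = ∑ i ∈ T, (p i * Real.log (p i / m i) - p i + m i) := by
    refine (Finset.sum_subset (Finset.subset_univ T) ?_).symm
    intro i _ hi
    rcases hzero i hi with ⟨h1, h2⟩
    simp [h1, h2]
  have hw : ∑ i ∈ T, (2 * p i + 4 * m i) / 3 = 2 := by
    have heq : ∑ i ∈ T, (2 * p i + 4 * m i) / 3 = ∑ i, (2 * p i + 4 * m i) / 3 := by
      refine Finset.sum_subset (Finset.subset_univ T) ?_
      intro i _ hi
      rcases hzero i hi with ⟨h1, h2⟩
      simp [h1, h2]
    rw [heq, ← Finset.sum_div, Finset.sum_add_distrib, ← Finset.mul_sum, ← Finset.mul_sum,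
      hpsum, hmsum]
    norm_num
  rw [hV, hkl]
  have hsed := Finset.sq_sum_div_le_sum_sq_div T (fun i => |p i - m i|)
      (g := fun i => (2 * p i + 4 * m i) / 3) ?hpos
  case hpos =>
    intro i hi
    have := (hmemT i).mp hi
    have := hp0 i
    positivity
  rw [hw] at hsed
  refine hsed.trans (Finset.sum_le_sum ?_)
  intro i hi
  have hmi := (hmemT i).mp hi
  have h := kl_pointwise (hp0 i) hmi
  calc |p i - m i| ^ 2 / ((2 * p i + 4 * m i) / 3)
      = 3*(p i - m i)^2/(2*(p i)+4*(m i)) := by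
        have h1 : 2 * p i + 4 * m i ≠ 0 := by
          have := hp0 i; positivity
        rw [sq_abs]; field_simp
    _ ≤ _ := h



lemma log_div_expand {a m : ℝ} (ha : 0 ≤ a) (hm : m ≠ 0) :
    a * Real.log (a / m) = a * Real.log a - a * Real.log m := by
  rcases eq_or_lt_of_le ha with h0 | h0
  · simp [← h0]
  · rw [Real.log_div h0.ne' hm]; ring

lemma gap_term {θ a b : ℝ} (ha : 0 ≤ a) (hb : 0 ≤ b) (h0 : 0 < θ) (h1 : θ < 1) :
    (θ*a+(1-θ)*b) * Real.log (1/(θ*a+(1-θ)*b)) - θ*(a*Real.log (1/a)) - (1-θ)*(b*Real.log (1/b))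
    = θ*(a*Real.log (a/(θ*a+(1-θ)*b)) - a + (θ*a+(1-θ)*b))
      + (1-θ)*(b*Real.log (b/(θ*a+(1-θ)*b)) - b + (θ*a+(1-θ)*b)) := by
  set m := θ*a+(1-θ)*b with hm
  by_cases hm0 : m = 0
  · have ha0 : a = 0 := by nlinarith
    have hb0 : b = 0 := by nlinarith
    simp [ha0, hb0, hm] at hm0 ⊢
  · simp only [one_div, Real.log_inv]
    rw [log_div_expand ha hm0, log_div_expand hb hm0, hm]
    ring

lemma entropy_gap (K : ℕ) (q s : Fin K → ℝ) (θ : ℝ)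
    (hq0 : ∀ i, 0 ≤ q i) (hqsum : ∑ i, q i = 1)
    (hs0 : ∀ i, 0 ≤ s i) (hssum : ∑ i, s i = 1)
    (hθ : θ ∈ Set.Icc (0 : ℝ) 1) :
    (θ * (1 - θ) / 2) * (∑ i, |q i - s i|) ^ 2
      ≤ (∑ i, (θ * q i + (1 - θ) * s i) * Real.log (1 / (θ * q i + (1 - θ) * s i)))
        - θ * (∑ i, q i * Real.log (1 / q i)) - (1 - θ) * (∑ i, s i * Real.log (1 / s i)) := by
  obtain ⟨hθ0, hθ1⟩ := hθ
  rcases eq_or_lt_of_le hθ0 with h0 | h0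
  · simp [← h0]
  rcases eq_or_lt_of_le hθ1 with h1 | h1
  · simp [h1]
  -- now 0 < θ < 1
  set m : Fin K → ℝ := fun i => θ * q i + (1 - θ) * s i with hm
  have hm0 : ∀ i, 0 ≤ m i := fun i => by
    have := hq0 i; have := hs0 i; simp only [hm]; nlinarith
  have hmsum : ∑ i, m i = 1 := by
    simp only [hm, Finset.sum_add_distrib, ← Finset.mul_sum, hqsum, hssum]
    ring
  have hmq : ∀ i, m i = 0 → q i = 0 := by
    intro i h
    have := hq0 i; have := hs0 i
    simp only [hm] at h; nlinarith
  have hms : ∀ i, m i = 0 → s i = 0 := by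
    intro i h
    have := hq0 i; have := hs0 i
    simp only [hm] at h; nlinarith
  have hgap : (∑ i, m i * Real.log (1 / m i))
        - θ * (∑ i, q i * Real.log (1 / q i)) - (1 - θ) * (∑ i, s i * Real.log (1 / s i))
      = θ * (∑ i, (q i * Real.log (q i / m i) - q i + m i))
        + (1 - θ) * (∑ i, (s i * Real.log (s i / m i) - s i + m i)) := by
    rw [Finset.mul_sum, Finset.mul_sum, Finset.mul_sum, Finset.mul_sum,
      ← Finset.sum_add_distrib, ← Finset.sum_sub_distrib, ← Finset.sum_sub_distrib]
    refine Finset.sum_congr rfl ?_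
    intro i _
    exact gap_term (hq0 i) (hs0 i) h0 h1
  have hpq := pinsker K q m hq0 hqsum hm0 hmsum hmq
  have hps := pinsker K s m hs0 hssum hm0 hmsum hms
  set D := ∑ i, |q i - s i| with hD
  have hD0 : 0 ≤ D := Finset.sum_nonneg fun i _ => abs_nonneg _
  have hVq : ∑ i, |q i - m i| = (1 - θ) * D := by
    rw [hD, Finset.mul_sum]
    refine Finset.sum_congr rfl fun i _ => ?_
    rw [show q i - m i = (1 - θ) * (q i - s i) by simp only [hm]; ring,
      abs_mul, abs_of_nonneg (by linarith : (0:ℝ) ≤ 1 - θ)]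
  have hVs : ∑ i, |s i - m i| = θ * D := by
    rw [hD, Finset.mul_sum]
    refine Finset.sum_congr rfl fun i _ => ?_
    rw [show s i - m i = θ * (s i - q i) by simp only [hm]; ring,
      abs_mul, abs_of_nonneg hθ0, abs_sub_comm]
  rw [hVq] at hpq
  rw [hVs] at hps
  show θ * (1 - θ) / 2 * D ^ 2 ≤ (∑ i, m i * Real.log (1 / m i))
    - θ * (∑ i, q i * Real.log (1 / q i)) - (1 - θ) * (∑ i, s i * Real.log (1 / s i))
  rw [hgap]
  have e1 : ((1 - θ) * D)^2 / 2 = (1 - θ)^2 * D^2 / 2 := by ring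
  have e2 : (θ * D)^2 / 2 = θ^2 * D^2 / 2 := by ring
  rw [e1] at hpq; rw [e2] at hps
  nlinarith [mul_le_mul_of_nonneg_left hpq h0.le,
    mul_le_mul_of_nonneg_left hps (by linarith : (0:ℝ) ≤ 1 - θ)]



/-- Strong concavity of the Shannon entropy with respect
to the `ℓ1` norm: for probability vectors `q, s` on a finite set of size `K`
and `θ ∈ [0,1]`, with `H(p) = Σ_i p_i ln(1/p_i)` (the convention
`0·ln(1/0) = 0` holds automatically in Lean since `1/0 = 0` and `log 0 = 0`),
`H(θq + (1−θ)s) − θH(q) − (1−θ)H(s) ≥ (θ(1−θ)/2)(Σ_i |q_i − s_i|)²`.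
In particular, for `θ = 1/2`,
`H((q+s)/2) − (1/2)H(q) − (1/2)H(s) ≥ (1/8)‖q − s‖₁²`. -/
theorem shannon_entropy_strong_concavity_l1
    (K : ℕ) (hK : 1 ≤ K) (q s : Fin K → ℝ) (θ : ℝ)
    (hq0 : ∀ i, 0 ≤ q i) (hqsum : ∑ i, q i = 1)
    (hs0 : ∀ i, 0 ≤ s i) (hssum : ∑ i, s i = 1)
    (hθ : θ ∈ Set.Icc (0 : ℝ) 1) :
    let H : (Fin K → ℝ) → ℝ := fun p => ∑ i, p i * Real.log (1 / p i)
    (θ * (1 - θ) / 2) * (∑ i, |q i - s i|) ^ 2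
        ≤ H (fun i => θ * q i + (1 - θ) * s i) - θ * H q - (1 - θ) * H s ∧
      (1 / 8) * (∑ i, |q i - s i|) ^ 2
        ≤ H (fun i => (q i + s i) / 2) - (1 / 2) * H q - (1 / 2) * H s := by
  intro H
  constructor
  · exact entropy_gap K q s θ hq0 hqsum hs0 hssum hθ
  · have h := entropy_gap K q s (1/2) hq0 hqsum hs0 hssum (by norm_num)
    have hsum : ∑ i, ((1:ℝ)/2 * q i + (1 - 1/2) * s i) * Real.log (1/((1:ℝ)/2 * q i + (1 - 1/2) * s i))
        = ∑ i, ((q i + s i)/2) * Real.log (1/((q i + s i)/2)) := by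
      refine Finset.sum_congr rfl fun i _ => ?_
      have : (1:ℝ)/2 * q i + (1 - 1/2) * s i = (q i + s i)/2 := by ring
      rw [this]
    rw [hsum] at h
    show (1:ℝ) / 8 * (∑ i, |q i - s i|) ^ 2
      ≤ (∑ i, ((q i + s i)/2) * Real.log (1/((q i + s i)/2)))
        - 1/2 * (∑ i, q i * Real.log (1/q i)) - 1/2 * (∑ i, s i * Real.log (1/s i))
    have e : (1:ℝ)/2 * (1 - 1/2) / 2 = 1/8 := by norm_num
    rw [e] at h
    linarith
end

section
/- Let M ≥ 2 be an integer and let x_1,…,x_M ∈ [0,1] satisfy Σ_{j=1}^M x_j = 1. Then Σ_{1≤j<l≤M} |x_j − x_l| ≤ M − 1, with equality if and only if exactly one x_j equals 1 and all the others equal 0. -/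
/-- Let `M ≥ 2` and `x_1, …, x_M ∈ [0,1]` with
`Σ_j x_j = 1`.  Then `Σ_{j<l} |x_j − x_l| ≤ M − 1`, with equality iff
exactly one `x_j` equals `1` and all the others equal `0`. -/
theorem sum_pairwise_abs_le_of_sum_eq_one
    (M : ℕ) (hM : 2 ≤ M) (x : Fin M → ℝ)
    (hx : ∀ j, x j ∈ Set.Icc (0 : ℝ) 1) (hsum : ∑ j, x j = 1) :
    (∑ j, ∑ l ∈ Finset.univ.filter (fun l => j < l), |x j - x l|)
        ≤ (M : ℝ) - 1 ∧
      ((∑ j, ∑ l ∈ Finset.univ.filter (fun l => j < l), |x j - x l|)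
          = (M : ℝ) - 1 ↔
        ∃ j, x j = 1 ∧ ∀ l, l ≠ j → x l = 0) := by
  have hx0 : ∀ j, 0 ≤ x j := fun j => (hx j).1
  -- the "trivial bound" sum
  have hT : (∑ j, ∑ l ∈ Finset.univ.filter (fun l => j < l), (x j + x l))
      = (M : ℝ) - 1 := by
    have hsplit : (∑ j, ∑ l ∈ Finset.univ.filter (fun l => j < l), (x j + x l))
        = (∑ j, ∑ l ∈ Finset.univ.filter (fun l => j < l), x j)
          + (∑ j, ∑ l ∈ Finset.univ.filter (fun l => j < l), x l) := by
      rw [← Finset.sum_add_distrib]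
      exact Finset.sum_congr rfl fun j _ => (Finset.sum_add_distrib)
    have h1 : (∑ j : Fin M, ∑ l ∈ Finset.univ.filter (fun l => j < l), x j)
        = ∑ j : Fin M, ((M - 1 - j.val : ℕ) : ℝ) * x j := by
      refine Finset.sum_congr rfl fun j _ => ?_
      rw [Finset.sum_const, nsmul_eq_mul]
      congr 2
      have : Finset.univ.filter (fun l => j < l) = Finset.Ioi j := by ext l; simp
      rw [this, Fin.card_Ioi]
    have h2 : (∑ j : Fin M, ∑ l ∈ Finset.univ.filter (fun l => j < l), x l)
        = ∑ l : Fin M, ((l.val : ℕ) : ℝ) * x l := by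
      rw [Finset.sum_comm' (t' := (Finset.univ : Finset (Fin M)))
        (s' := fun l => Finset.univ.filter (fun j => j < l))
        (fun a b => by simp)]
      refine Finset.sum_congr rfl fun l _ => ?_
      rw [Finset.sum_const, nsmul_eq_mul]
      congr 2
      have : Finset.univ.filter (fun j => j < l) = Finset.Iio l := by ext j; simp
      rw [this, Fin.card_Iio]
    rw [hsplit, h1, h2, ← Finset.sum_add_distrib]
    have : ∀ j : Fin M, ((M - 1 - j.val : ℕ) : ℝ) * x j + ((j.val : ℕ) : ℝ) * x j
        = ((M : ℝ) - 1) * x j := by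
      intro j
      have hj : j.val ≤ M - 1 := Nat.le_sub_one_of_lt j.isLt
      have : ((M - 1 - j.val : ℕ) : ℝ) = (M : ℝ) - 1 - j.val := by
        rw [Nat.cast_sub hj, Nat.cast_sub (le_trans (Nat.one_le_iff_ne_zero.mpr
          (by omega)) le_rfl)]
        push_cast; ring
      rw [this]; ring
    rw [Finset.sum_congr rfl fun j _ => this j, ← Finset.mul_sum, hsum, mul_one]
  -- termwise bound
  have habs : ∀ j l : Fin M, |x j - x l| ≤ x j + x l := by
    intro j l
    rw [abs_sub_le_iff]
    constructor <;> nlinarith [hx0 j, hx0 l]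
  have hle : (∑ j, ∑ l ∈ Finset.univ.filter (fun l => j < l), |x j - x l|)
      ≤ (M : ℝ) - 1 := by
    rw [← hT]
    exact Finset.sum_le_sum fun j _ => Finset.sum_le_sum fun l _ => habs j l
  refine ⟨hle, ?_, ?_⟩
  · -- equality → deterministic
    intro heq
    -- each pair satisfies |x j - x l| = x j + x l, hence x j = 0 ∨ x l = 0
    have hzero : ∀ j ∈ (Finset.univ : Finset (Fin M)),
        ∀ l ∈ Finset.univ.filter (fun l => j < l), |x j - x l| = x j + x l := by
      have h0 : (∑ j, ∑ l ∈ Finset.univ.filter (fun l => j < l),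
          ((x j + x l) - |x j - x l|)) = 0 := by
        have : (∑ j, ∑ l ∈ Finset.univ.filter (fun l => j < l),
            ((x j + x l) - |x j - x l|))
            = (∑ j, ∑ l ∈ Finset.univ.filter (fun l => j < l), (x j + x l))
              - (∑ j, ∑ l ∈ Finset.univ.filter (fun l => j < l), |x j - x l|) := by
          rw [← Finset.sum_sub_distrib]
          exact Finset.sum_congr rfl fun j _ => Finset.sum_sub_distrib _ _
        rw [this, hT, heq]; ring
      have hnn : ∀ j ∈ (Finset.univ : Finset (Fin M)),
          ∀ l ∈ Finset.univ.filter (fun l => j < l),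
          0 ≤ (x j + x l) - |x j - x l| := fun j _ l _ => by
        linarith [habs j l]
      intro j hj l hl
      have := (Finset.sum_eq_zero_iff_of_nonneg
        (fun j hj => Finset.sum_nonneg (hnn j hj))).mp h0 j hj
      have := (Finset.sum_eq_zero_iff_of_nonneg (hnn j hj)).mp this l hl
      linarith
    have hpair : ∀ j l : Fin M, j < l → x j = 0 ∨ x l = 0 := by
      intro j l hjl
      have h := hzero j (Finset.mem_univ j) l (by simp [hjl])
      rcases abs_cases (x j - x l) with ⟨h1, _⟩ | ⟨h1, _⟩
      · right; linarith [h1 ▸ h]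
      · left; linarith [h1 ▸ h]
    obtain ⟨j, _, hjne⟩ := Finset.exists_ne_zero_of_sum_ne_zero
      (s := Finset.univ) (f := x) (by rw [hsum]; norm_num)
    have hothers : ∀ l, l ≠ j → x l = 0 := by
      intro l hl
      rcases lt_or_gt_of_ne hl with h | h
      · rcases hpair l j h with h0 | h0
        · exact h0
        · exact absurd h0 hjne
      · rcases hpair j l h with h0 | h0
        · exact absurd h0 hjne
        · exact h0
    refine ⟨j, ?_, hothers⟩
    have := Finset.sum_eq_single j (fun l _ hl => hothers l hl)
      (fun h => absurd (Finset.mem_univ j) h)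
    rw [this] at hsum
    exact hsum
  · -- deterministic → equality
    rintro ⟨j, hj1, hj0⟩
    rw [← hT]
    refine Finset.sum_congr rfl fun a _ => Finset.sum_congr rfl fun b hb => ?_
    have hab : a < b := (Finset.mem_filter.mp hb).2
    have : x a = 0 ∨ x b = 0 := by
      by_cases ha : a = j
      · right; exact hj0 b (fun h => (ne_of_lt hab) (by rw [ha, h]))
      · left; exact hj0 a ha
    rcases this with h | h <;> rw [h] <;>
      simp [abs_of_nonneg, abs_of_nonpos, hx0 a, hx0 b, abs_of_nonneg (hx0 b), abs_of_nonneg (hx0 a)]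
end
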